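/- (Schröder's theorem) Let f(z) = c(z − z₁*)(z − z₂*) with c, z₁*, z₂* ∈ ℂ, c ≠ 0 and z₁* ≠ z₂*. Let L be the perpendicular bisector of the segment joining z₁* and z₂*, and let H₁, H₂ be the two open half-planes bounded by L, with z₁* ∈ H₁ and z₂* ∈ H₂. If z₀ ∈ H₁, then the Newton sequence z_{n+1} = z_n − f(z_n)/f'(z_n) is well defined (f'(z_n) ≠ 0 for all n), stays in H₁, and converges to z₁*; similarly, if z₀ ∈ H₂ then the Newton sequence converges to z₂*. -/

import Mathlib

lemma newton_schroeder_aux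
    (c z₁ z₂ : ℂ) (hc : c ≠ 0) (h₁₂ : z₁ ≠ z₂)
    (f : ℂ → ℂ) (hf : ∀ z, f z = c * (z - z₁) * (z - z₂))
    (z : ℕ → ℂ)
    (hz : ∀ n, z (n + 1) = z n - f (z n) / deriv f (z n))
    (h0 : ‖z 0 - z₁‖ < ‖z 0 - z₂‖) :
    (∀ n, deriv f (z n) ≠ 0) ∧
    (∀ n, ‖z n - z₁‖ < ‖z n - z₂‖) ∧
    Filter.Tendsto z Filter.atTop (nhds z₁) := by
  have hf' : f = fun w => c * (w - z₁) * (w - z₂) := funext hf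
  have hderiv : ∀ w, deriv f w = c * (2 * w - z₁ - z₂) := by
    intro w
    have h1 : HasDerivAt (fun w : ℂ => c * (w - z₁) * (w - z₂))
        ((c * 1) * (w - z₂) + (c * (w - z₁)) * 1) w :=
      (((hasDerivAt_id w).sub_const z₁).const_mul c).mul ((hasDerivAt_id w).sub_const z₂)
    rw [hf']
    have h2 : HasDerivAt (fun w : ℂ => c * (w - z₁) * (w - z₂)) (c * (2 * w - z₁ - z₂)) w := by
      convert h1 using 1; ring
    exact h2.deriv
  -- midpoint nondegeneracy from the strict inequality
  have hd : ∀ n, ‖z n - z₁‖ < ‖z n - z₂‖ →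
      2 * z n - z₁ - z₂ ≠ 0 := by
    intro n hlt h
    have e : z n - z₁ = -(z n - z₂) := by linear_combination h
    rw [e, norm_neg] at hlt
    exact lt_irrefl _ hlt
  set w : ℕ → ℂ := fun n => (z n - z₁) / (z n - z₂) with hw
  set r : ℝ := ‖w 0‖ with hr
  have hr0 : 0 ≤ r := norm_nonneg _
  have hz20 : z 0 - z₂ ≠ 0 := by
    intro h
    rw [h, norm_zero] at h0
    exact absurd h0 (not_lt.2 (norm_nonneg _))
  have hr1 : r < 1 := by
    rw [hr, hw]
    simp only [norm_div]
    rw [div_lt_one (norm_pos_iff.mpr hz20)]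
    exact h0
  -- main simultaneous induction
  have key : ∀ n, ‖z n - z₁‖ < ‖z n - z₂‖ ∧
      ‖w n‖ ≤ r ^ (n + 1) := by
    intro n
    induction n with
    | zero => exact ⟨h0, by rw [pow_one]⟩
    | succ n ih =>
      obtain ⟨hlt, hwb⟩ := ih
      have hzn2 : z n - z₂ ≠ 0 := by
        intro h
        rw [h, norm_zero] at hlt
        exact absurd hlt (not_lt.2 (norm_nonneg _))
      have hdn := hd n hlt
      have hdn' : z n * 2 - z₁ - z₂ ≠ 0 := by rwa [mul_comm] at hdn
      have e1 : z (n + 1) - z₁ = (z n - z₁) ^ 2 / (2 * z n - z₁ - z₂) := by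
        rw [hz n, hf, hderiv]
        field_simp
        ring
      have e2 : z (n + 1) - z₂ = (z n - z₂) ^ 2 / (2 * z n - z₁ - z₂) := by
        rw [hz n, hf, hderiv]
        field_simp
        ring
      have hlt' : ‖z (n + 1) - z₁‖ < ‖z (n + 1) - z₂‖ := by
        rw [e1, e2, norm_div, norm_div, norm_pow, norm_pow]
        have hD : 0 < ‖2 * z n - z₁ - z₂‖ := by
          simpa [norm_pos_iff] using hdn
        exact div_lt_div_of_pos_right
          (pow_lt_pow_left₀ hlt (norm_nonneg _) two_ne_zero) hD
      refine ⟨hlt', ?_⟩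
      have hwsq : w (n + 1) = (w n) ^ 2 := by
        show (z (n + 1) - z₁) / (z (n + 1) - z₂) = ((z n - z₁) / (z n - z₂)) ^ 2
        rw [e1, e2]
        field_simp
      calc ‖w (n + 1)‖ = ‖w n‖ ^ 2 := by rw [hwsq, norm_pow]
        _ ≤ (r ^ (n + 1)) ^ 2 := pow_le_pow_left₀ (norm_nonneg _) hwb 2
        _ = r ^ (2 * (n + 1)) := by rw [← pow_mul, mul_comm]
        _ ≤ r ^ (n + 2) := pow_le_pow_of_le_one hr0 hr1.le (by omega)
  refine ⟨?_, fun n => (key n).1, ?_⟩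
  · intro n
    rw [hderiv]
    exact mul_ne_zero hc (hd n (key n).1)
  · -- quantitative bound and convergence
    have hbound : ∀ n, ‖z n - z₁‖ ≤ r ^ (n + 1) * (‖z₁ - z₂‖ / (1 - r)) := by
      intro n
      obtain ⟨hlt, hwb⟩ := key n
      have hzn2 : z n - z₂ ≠ 0 := by
        intro h
        rw [h, norm_zero] at hlt
        exact absurd hlt (not_lt.2 (norm_nonneg _))
      have hwr : ‖w n‖ ≤ r :=
        hwb.trans (by calc r ^ (n + 1) ≤ r ^ 1 := pow_le_pow_of_le_one hr0 hr1.le (by omega)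
                         _ = r := pow_one r)
      have h1w : (1 : ℝ) - r ≤ ‖1 - w n‖ := by
        have htri : ‖(1:ℂ)‖ ≤ ‖1 - w n‖ + ‖w n‖ := by
          simpa using norm_add_le (1 - w n) (w n)
        rw [norm_one] at htri
        linarith
      have h1wpos : (0 : ℝ) < 1 - r := by linarith
      have e : (1 - w n) * (z n - z₁) = w n * (z₁ - z₂) := by
        show (1 - (z n - z₁) / (z n - z₂)) * (z n - z₁) = (z n - z₁) / (z n - z₂) * (z₁ - z₂)
        field_simp
        ring
      have eabs : ‖1 - w n‖ * ‖z n - z₁‖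
          = ‖w n‖ * ‖z₁ - z₂‖ := by
        rw [← norm_mul, ← norm_mul, e]
      have h1wne : ‖1 - w n‖ > 0 := lt_of_lt_of_le h1wpos h1w
      calc ‖z n - z₁‖
          = ‖1 - w n‖ * ‖z n - z₁‖ / ‖1 - w n‖ := by
            field_simp
        _ = ‖w n‖ * ‖z₁ - z₂‖ / ‖1 - w n‖ := by rw [eabs]
        _ ≤ r ^ (n + 1) * ‖z₁ - z₂‖ / (1 - r) := by
            apply div_le_div₀ (by positivity)
              (mul_le_mul hwb le_rfl (norm_nonneg _) (by positivity)) h1wpos h1w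
        _ = r ^ (n + 1) * (‖z₁ - z₂‖ / (1 - r)) := by ring
    rw [tendsto_iff_norm_sub_tendsto_zero]
    have hlim : Filter.Tendsto (fun n => r ^ (n + 1) * (‖z₁ - z₂‖ / (1 - r)))
        Filter.atTop (nhds 0) := by
      have : Filter.Tendsto (fun n : ℕ => r ^ (n + 1)) Filter.atTop (nhds 0) :=
        (tendsto_pow_atTop_nhds_zero_of_lt_one hr0 hr1).comp (Filter.tendsto_add_atTop_nat 1)
      simpa using this.mul_const (‖z₁ - z₂‖ / (1 - r))
    refine squeeze_zero (fun n => norm_nonneg _) (fun n => ?_) hlim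
    simpa using hbound n

theorem newton_schroeder
    (c z₁ z₂ : ℂ) (hc : c ≠ 0) (h₁₂ : z₁ ≠ z₂)
    (f : ℂ → ℂ) (hf : ∀ z, f z = c * (z - z₁) * (z - z₂))
    (z : ℕ → ℂ)
    (hz : ∀ n, z (n + 1) = z n - f (z n) / deriv f (z n)) :
    (‖z 0 - z₁‖ < ‖z 0 - z₂‖ →
      (∀ n, deriv f (z n) ≠ 0) ∧
      (∀ n, ‖z n - z₁‖ < ‖z n - z₂‖) ∧
      Filter.Tendsto z Filter.atTop (nhds z₁)) ∧
    (‖z 0 - z₂‖ < ‖z 0 - z₁‖ →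
      (∀ n, deriv f (z n) ≠ 0) ∧
      (∀ n, ‖z n - z₂‖ < ‖z n - z₁‖) ∧
      Filter.Tendsto z Filter.atTop (nhds z₂)) := by
  constructor
  · exact newton_schroeder_aux c z₁ z₂ hc h₁₂ f hf z hz
  · exact newton_schroeder_aux c z₂ z₁ hc h₁₂.symm f
      (fun w => by rw [hf]; ring) z hz
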